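/- A balanced allocation A of m goods among n agents (where each agent receives exactly k = m/n goods) is fractionally Pareto optimal if and only if there exists a strictly positive weight vector α ∈ ℝ^n such that A maximizes the weighted utilitarian social welfare ∑_i α_i · v_i(A_i) over all balanced allocations. -/

import Mathlib

open Finset

/-- A balanced allocation: an ordered partition of the goods where each agent
receives exactly `k` goods. -/
def IsBalanced (n m k : ℕ) (A : Fin n → Finset (Fin m)) : Prop :=
  (∀ j : Fin m, ∃! i : Fin n, j ∈ A i) ∧ ∀ i : Fin n, (A i).card = k

/-- A balanced fractional allocation. -/
def IsFracBalanced (n m k : ℕ) (x : Fin n → Fin m → ℝ) : Prop :=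
  (∀ i j, 0 ≤ x i j) ∧ (∀ i : Fin n, ∑ j : Fin m, x i j = (k : ℝ)) ∧
    (∀ j : Fin m, ∑ i : Fin n, x i j = 1)

/-- Fractional Pareto optimality among balanced (fractional) allocations. -/
def IsFPO (n m k : ℕ) (v : Fin n → Fin m → ℝ) (A : Fin n → Finset (Fin m)) : Prop :=
  ¬ ∃ x : Fin n → Fin m → ℝ, IsFracBalanced n m k x ∧
    (∀ i : Fin n, ∑ j ∈ A i, v i j ≤ ∑ j : Fin m, v i j * x i j) ∧
    (∃ i : Fin n, ∑ j ∈ A i, v i j < ∑ j : Fin m, v i j * x i j)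

open scoped RealInnerProductSpace

section Cone

variable {E : Type*} [NormedAddCommGroup E] [InnerProductSpace ℝ E] [FiniteDimensional ℝ E]
variable {ι : Type*} [Fintype ι]

/-- The cone generated by a finite family. -/
def coneGen (t : ι → E) : Set E :=
  {x | ∃ lam : ι → ℝ, (∀ i, 0 ≤ lam i) ∧ x = ∑ i, lam i • t i}

lemma coneGen_carath (t : ι → E) :
    ∀ d : ℕ, ∀ lam : ι → ℝ, (∀ i, 0 ≤ lam i) →
      (Finset.univ.filter (fun i => lam i ≠ 0)).card ≤ d →
      ∃ S : Finset ι, LinearIndependent ℝ (fun i : S => t i) ∧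
        ∃ mu : ι → ℝ, (∀ i, 0 ≤ mu i) ∧ (∀ i, i ∉ S → mu i = 0) ∧
          ∑ i, mu i • t i = ∑ i, lam i • t i := by
  classical
  intro d
  induction d with
  | zero =>
    intro lam hlam hcard
    have hz : ∀ i, lam i = 0 := by
      intro i
      by_contra h
      have : i ∈ Finset.univ.filter (fun i => lam i ≠ 0) := by simp [h]
      have := Finset.card_pos.2 ⟨i, this⟩
      omega
    refine ⟨∅, ?_, 0, by simp, by simp, ?_⟩
    · exact linearIndependent_empty_type
    · simp [hz]
  | succ d ih =>
    intro lam hlam hcard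
    set S₀ := Finset.univ.filter (fun i => lam i ≠ 0) with hS₀
    by_cases hli : LinearIndependent ℝ (fun i : S₀ => t i)
    · exact ⟨S₀, hli, lam, hlam, fun i hi => by simpa [hS₀] using hi, rfl⟩
    · rw [Fintype.not_linearIndependent_iff] at hli
      obtain ⟨g, hg, i₀, hgi₀⟩ := hli
      -- WLOG some coefficient positive
      have hwlog : ∃ g : S₀ → ℝ, ∑ i : S₀, g i • t i = 0 ∧ ∃ i, 0 < g i := by
        rcases lt_or_gt_of_ne (Ne.symm hgi₀).symm with h | h
        · refine ⟨-g, ?_, i₀, by simpa using h⟩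
          have : ∑ i : S₀, (-g) i • t i = -∑ i : S₀, g i • t i := by
            simp [neg_smul]
          rw [this, hg, neg_zero]
        · exact ⟨g, hg, i₀, h⟩
      obtain ⟨g, hg, ipos, hipos⟩ := hwlog
      set mu : ι → ℝ := fun i => if h : i ∈ S₀ then g ⟨i, h⟩ else 0 with hmu
      have hmusum : ∑ i, mu i • t i = 0 := by
        rw [← Finset.sum_subset (Finset.subset_univ S₀)]
        · rw [← Finset.sum_attach S₀ (fun i => mu i • t i), ← hg]
          refine Finset.sum_congr rfl fun i _ => ?_
          simp [hmu, i.2]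
        · intro i _ hi
          simp [hmu, hi]
      set Pos := S₀.filter (fun i => 0 < mu i) with hPos
      have hPosne : Pos.Nonempty := by
        refine ⟨ipos, ?_⟩
        simp only [hPos, Finset.mem_filter]
        exact ⟨ipos.2, by simpa [hmu, ipos.2] using hipos⟩
      obtain ⟨i₁, hi₁Pos, hi₁min⟩ :=
        Finset.exists_min_image Pos (fun i => lam i / mu i) hPosne
      have hmui₁ : 0 < mu i₁ := (Finset.mem_filter.1 hi₁Pos).2
      set r : ℝ := lam i₁ / mu i₁ with hr
      have hr0 : 0 ≤ r := div_nonneg (hlam i₁) hmui₁.le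
      set lam' : ι → ℝ := fun i => lam i - r * mu i with hlam'
      have hlam'0 : ∀ i, 0 ≤ lam' i := by
        intro i
        rcases le_or_gt (mu i) 0 with h | h
        · have : r * mu i ≤ 0 := mul_nonpos_of_nonneg_of_nonpos hr0 h
          simp only [hlam']; linarith [hlam i]
        · have hiS₀ : i ∈ S₀ := by
            by_contra h0
            simp only [hmu] at h
            rw [dif_neg h0] at h
            exact absurd h (lt_irrefl 0)
          have hiPos : i ∈ Pos := Finset.mem_filter.2 ⟨hiS₀, h⟩
          have h1 : r ≤ lam i / mu i := hi₁min i hiPos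
          have h2 : r * mu i ≤ lam i := (le_div_iff₀ h).1 h1
          simp only [hlam']
          linarith
      have hsum' : ∑ i, lam' i • t i = ∑ i, lam i • t i := by
        simp only [hlam', sub_smul, Finset.sum_sub_distrib, mul_smul, ← Finset.smul_sum,
          hmusum, smul_zero, sub_zero]
      have hlam'i₁ : lam' i₁ = 0 := by
        simp only [hlam', hr]
        field_simp
        ring
      have hsubset : Finset.univ.filter (fun i => lam' i ≠ 0) ⊆ S₀.erase i₁ := by
        intro i hi
        simp only [Finset.mem_filter, Finset.mem_univ, true_and] at hi
        refine Finset.mem_erase.2 ⟨?_, ?_⟩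
        · rintro rfl; exact hi hlam'i₁
        · simp only [hS₀, Finset.mem_filter, Finset.mem_univ, true_and]
          intro h0
          apply hi
          have hmu0 : mu i = 0 := by
            simp only [hmu]
            rw [dif_neg (by simp [hS₀, h0])]
          simp only [hlam', h0, hmu0, mul_zero, sub_zero]
      have hi₁S₀ : i₁ ∈ S₀ := (Finset.mem_filter.1 hi₁Pos).1
      have hcard' : (Finset.univ.filter (fun i => lam' i ≠ 0)).card ≤ d := by
        have h1 := Finset.card_le_card hsubset
        have h2 := Finset.card_erase_of_mem hi₁S₀
        omega
      obtain ⟨S, hS, mu', hmu'0, hmu'supp, hmu'sum⟩ := ih lam' hlam'0 hcard'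
      exact ⟨S, hS, mu', hmu'0, hmu'supp, by rw [hmu'sum, hsum']⟩

open scoped RealInnerProductSpace

lemma coneGenF_closed (t : ι → E) (S : Finset ι)
    (hli : LinearIndependent ℝ (fun i : S => t i)) :
    IsClosed {x : E | ∃ lam : ι → ℝ, (∀ i, 0 ≤ lam i) ∧ (∀ i, i ∉ S → lam i = 0) ∧
      x = ∑ i, lam i • t i} := by
  classical
  let L : ({x // x ∈ S} → ℝ) →ₗ[ℝ] E :=
    { toFun := fun g => ∑ i : S, g i • t i
      map_add' := by intro a b; simp [add_smul, Finset.sum_add_distrib]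
      map_smul' := by intro c a; simp [mul_smul, ← Finset.smul_sum] }
  have hker : LinearMap.ker L = ⊥ := by
    rw [LinearMap.ker_eq_bot']
    intro g hg
    have := Fintype.linearIndependent_iff.1 hli g hg
    funext i; exact this i
  have hclosed := (LinearMap.isClosedEmbedding_of_injective hker).isClosedMap
  have hset : IsClosed {g : ({x // x ∈ S} → ℝ) | ∀ i, 0 ≤ g i} := by
    have : {g : ({x // x ∈ S} → ℝ) | ∀ i, 0 ≤ g i} = ⋂ i, {g | 0 ≤ g i} := by
      ext; simp [Set.mem_iInter]
    rw [this]
    exact isClosed_iInter fun i => isClosed_le continuous_const (continuous_apply i)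
  have himg := hclosed _ hset
  have hseteq : {x : E | ∃ lam : ι → ℝ, (∀ i, 0 ≤ lam i) ∧ (∀ i, i ∉ S → lam i = 0) ∧
      x = ∑ i, lam i • t i} = L '' {g : ({x // x ∈ S} → ℝ) | ∀ i, 0 ≤ g i} := by
    ext x
    constructor
    · rintro ⟨lam, h0, hsupp, rfl⟩
      refine ⟨fun i => lam i, fun i => h0 i, ?_⟩
      show ∑ i : S, lam i • t i = ∑ i, lam i • t i
      rw [Finset.univ_eq_attach, Finset.sum_attach S (fun i => lam i • t i)]
      exact Finset.sum_subset S.subset_univ (fun i _ hi => by rw [hsupp i hi, zero_smul])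
    · rintro ⟨g, hg, rfl⟩
      refine ⟨fun i => if h : i ∈ S then g ⟨i, h⟩ else 0, ?_, ?_, ?_⟩
      · intro i
        by_cases h : i ∈ S
        · simpa [h] using hg ⟨i, h⟩
        · simp [h]
      · intro i hi; simp [hi]
      · show (∑ i : S, g i • t i) = _
        calc ∑ i : S, g i • t i
            = ∑ i ∈ S.attach, (if h : (i : ι) ∈ S then g ⟨i, h⟩ else 0) • t (i : ι) := by
              rw [Finset.univ_eq_attach]
              exact Finset.sum_congr rfl fun i _ => by simp [i.2]
          _ = ∑ i ∈ S, (if h : i ∈ S then g ⟨i, h⟩ else 0) • t i :=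
              Finset.sum_attach S (fun i => (if h : i ∈ S then g ⟨i, h⟩ else 0) • t i)
          _ = ∑ i : ι, (if h : i ∈ S then g ⟨i, h⟩ else 0) • t i :=
              Finset.sum_subset S.subset_univ (fun i _ hi => by simp [hi])
  rw [hseteq]
  exact himg

lemma coneGen_isClosed (t : ι → E) : IsClosed (coneGen t) := by
  classical
  have heq : coneGen t = ⋃ S ∈ {S : Finset ι | LinearIndependent ℝ (fun i : S => t i)},
      {x : E | ∃ lam : ι → ℝ, (∀ i, 0 ≤ lam i) ∧ (∀ i, i ∉ S → lam i = 0) ∧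
        x = ∑ i, lam i • t i} := by
    ext x
    simp only [Set.mem_iUnion, Set.mem_setOf_eq]
    constructor
    · rintro ⟨lam, h0, rfl⟩
      obtain ⟨S, hS, mu, hmu0, hsupp, hsum⟩ := coneGen_carath t _ lam h0 le_rfl
      exact ⟨S, hS, mu, hmu0, hsupp, hsum.symm⟩
    · rintro ⟨S, hS, lam, h0, hsupp, rfl⟩
      exact ⟨lam, h0, rfl⟩
  rw [heq]
  exact (Set.toFinite _).isClosed_biUnion fun S hS => coneGenF_closed t S hS

lemma zero_mem_coneGen (t : ι → E) : (0 : E) ∈ coneGen t :=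
  ⟨0, fun i => le_rfl, by simp⟩

def coneGenCone (t : ι → E) : ConvexCone ℝ E where
  carrier := coneGen t
  smul_mem' := by
    rintro c hc x ⟨lam, h0, rfl⟩
    exact ⟨fun i => c * lam i, fun i => mul_nonneg hc.le (h0 i),
      by simp [Finset.smul_sum, mul_smul]⟩
  add_mem' := by
    rintro x ⟨lam, h0, rfl⟩ y ⟨mu, h1, rfl⟩
    exact ⟨fun i => lam i + mu i, fun i => add_nonneg (h0 i) (h1 i),
      by simp [add_smul, Finset.sum_add_distrib]⟩

lemma mem_coneGen_of_dual (t : ι → E) {w : E}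
    (hw : ∀ y : E, (∀ x ∈ coneGen t, 0 ≤ ⟪x, y⟫) → 0 ≤ ⟪y, w⟫) :
    w ∈ coneGen t := by
  haveI : CompleteSpace E := FiniteDimensional.complete ℝ E
  by_contra hwn
  obtain ⟨f, u, hfs, hfw⟩ :=
    geometric_hahn_banach_closed_point (coneGenCone t).convex (coneGen_isClosed t) hwn
  have hu : 0 < u := by simpa using hfs 0 (zero_mem_coneGen t)
  have hle : ∀ x ∈ coneGen t, f x ≤ 0 := by
    intro x hx
    by_contra hpos
    push_neg at hpos
    have hmem : ((u / f x + 1) • x) ∈ coneGen t :=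
      (coneGenCone t).smul_mem (by positivity) hx
    have := hfs _ hmem
    rw [map_smul, smul_eq_mul, add_mul, div_mul_cancel₀ _ hpos.ne', one_mul] at this
    linarith
  set y : E := -(InnerProductSpace.toDual ℝ E).symm f with hydef
  have hy : ∀ z, ⟪z, y⟫ = - f z := by
    intro z
    rw [hydef, inner_neg_right, real_inner_comm, InnerProductSpace.toDual_symm_apply]
  have := hw y (fun x hx => by rw [hy]; linarith [hle x hx])
  rw [real_inner_comm, hy] at this
  linarith

lemma self_mem_coneGen [DecidableEq ι] (t : ι → E) (i : ι) : t i ∈ coneGen t := by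
  refine ⟨fun j => if j = i then 1 else 0, fun j => by positivity, ?_⟩
  rw [Finset.sum_congr rfl (fun j _ => ?_)]
  · rw [Finset.sum_ite_eq' Finset.univ i (fun j => t j), if_pos (Finset.mem_univ i)]
  · show (if j = i then (1:ℝ) else 0) • t j = if j = i then t j else 0
    split <;> simp_all

end Cone

lemma eucl_inner_eq {N : ℕ} (w y : EuclideanSpace ℝ (Fin N)) :
    ⟪w, y⟫ = ∑ j, w j * y j := by
  simp [PiLp.inner_apply, RCLike.inner_apply, starRingEnd_apply]
  exact Finset.sum_congr rfl fun j _ => mul_comm _ _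

lemma exists_pos_dual_vector {N : ℕ} {ι : Type*} [Fintype ι] [DecidableEq ι]
    (g : ι → EuclideanSpace ℝ (Fin N))
    (hkey : ∀ x ∈ coneGen g, (∀ i, x i ≤ 0) → x = 0) :
    ∃ α : EuclideanSpace ℝ (Fin N), (∀ i, 0 < α i) ∧ ∀ B, 0 ≤ ⟪g B, α⟫ := by
  classical
  set O : Set (EuclideanSpace ℝ (Fin N)) := {y | ∀ i, 0 < y i} with hO
  have hOopen : IsOpen O := by
    have : O = ⋂ i, (EuclideanSpace.proj (𝕜 := ℝ) i) ⁻¹' (Set.Ioi (0:ℝ)) := by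
      ext y
      simp [hO, Set.mem_iInter, PiLp.proj_apply]
    rw [this]
    exact isOpen_iInter_of_finite fun i =>
      (isOpen_Ioi).preimage (EuclideanSpace.proj (𝕜 := ℝ) i).continuous
  have hOconv : Convex ℝ O := by
    intro x hx y hy a b ha hb hab
    intro i
    have hco : (a • x + b • y) i = a * x i + b * y i := by
      simp [PiLp.add_apply, PiLp.smul_apply, smul_eq_mul]
    rw [hco]
    rcases ha.eq_or_lt with h | h
    · have hb1 : b = 1 := by linarith
      rw [← h, hb1]; simpa using hy i
    · have h1 := mul_pos h (hx i)
      have h2 := mul_nonneg hb (hy i).le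
      linarith
  set D : Set (EuclideanSpace ℝ (Fin N)) := {y | ∀ x ∈ coneGen g, 0 ≤ ⟪x, y⟫} with hD
  have hDconv : Convex ℝ D := by
    intro y1 hy1 y2 hy2 a b ha hb hab
    intro x hx
    rw [inner_add_right, real_inner_smul_right, real_inner_smul_right]
    have := hy1 x hx; have := hy2 x hx
    have h1 := mul_nonneg ha (hy1 x hx)
    have h2 := mul_nonneg hb (hy2 x hx)
    linarith
  by_cases hsep : ∃ α ∈ D, α ∈ O
  · obtain ⟨α, hαD, hαO⟩ := hsep
    exact ⟨α, hαO, fun B => hαD (g B) (self_mem_coneGen g B)⟩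
  · exfalso
    have hdisj : Disjoint O D := by
      rw [Set.disjoint_iff_inter_eq_empty, Set.eq_empty_iff_forall_notMem]
      rintro α ⟨hαO, hαD⟩
      exact hsep ⟨α, hαD, hαO⟩
    obtain ⟨f, c, hfO, hfD⟩ := geometric_hahn_banach_open hOconv hOopen hDconv hdisj
    have h0D : (0 : EuclideanSpace ℝ (Fin N)) ∈ D := fun x _ => by simp
    have hc0 : c ≤ 0 := by simpa using hfD 0 h0D
    set one : EuclideanSpace ℝ (Fin N) := WithLp.toLp 2 (fun _ => (1:ℝ)) with hone
    have honeO : one ∈ O := fun i => one_pos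
    have hfone : f one < c := hfO one honeO
    have hc0' : 0 ≤ c := by
      by_contra hc
      push_neg at hc
      have hfone_neg : f one < 0 := lt_trans hfone hc
      have hε : (0:ℝ) < c / (2 * f one) := by
        apply div_pos_iff.2
        right
        constructor <;> linarith
      have := hfO ((c / (2 * f one)) • one) (fun i => by
        have hco : ((c / (2 * f one)) • one) i = (c / (2 * f one)) * 1 := by
          simp [PiLp.smul_apply, smul_eq_mul, hone]
        rw [hco, mul_one]; exact hε)
      rw [map_smul, smul_eq_mul] at this
      have hne : f one ≠ 0 := ne_of_lt hfone_neg
      have : c / (2 * f one) * f one = c / 2 := by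
        field_simp
      nlinarith [hfO ((c / (2 * f one)) • one) (fun i => by
        have hco : ((c / (2 * f one)) • one) i = (c / (2 * f one)) * 1 := by
          simp [PiLp.smul_apply, smul_eq_mul, hone]
        rw [hco, mul_one]; exact hε), this]
    have hc : c = 0 := le_antisymm hc0 hc0'
    set w : EuclideanSpace ℝ (Fin N) := (InnerProductSpace.toDual ℝ (EuclideanSpace ℝ (Fin N))).symm f with hw
    have hwf : ∀ y : EuclideanSpace ℝ (Fin N), ⟪w, y⟫ = f y := fun y => InnerProductSpace.toDual_symm_apply
    have hwC : w ∈ coneGen g := by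
      apply mem_coneGen_of_dual
      intro y hy
      rw [real_inner_comm, hwf]
      rw [hc] at hfD
      exact hfD y hy
    have hwneg : ∀ i, w i ≤ 0 := by
      intro i
      by_contra hpos
      push_neg at hpos
      set S : ℝ := ∑ j, w j with hS
      have hval : ∀ ε : ℝ, 0 < ε → w i + ε * S < 0 := by
        intro ε hε
        set y : EuclideanSpace ℝ (Fin N) := WithLp.toLp 2 (fun j => if j = i then 1 + ε else ε) with hy
        have hyO : y ∈ O := by
          intro j
          show (if j = i then 1 + ε else ε) > 0
          split <;> linarith
        have h1 : f y < 0 := by rw [← hc]; exact hfO y hyO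
        rw [← hwf, eucl_inner_eq] at h1
        have h2 : ∀ j, w j * y j = w j * ε + (if j = i then w j else 0) := by
          intro j
          show w j * (if j = i then 1 + ε else ε) = _
          split <;> ring
        rw [Finset.sum_congr rfl (fun j _ => h2 j), Finset.sum_add_distrib,
          Finset.sum_ite_eq' Finset.univ i (fun j => w j), if_pos (Finset.mem_univ i),
          ← Finset.sum_mul] at h1
        rw [← hS] at h1
        linarith
      have hε : (0:ℝ) < w i / (2 * (|S| + 1)) := by positivity
      have h3 := hval _ hε
      have h4 : w i / (2 * (|S| + 1)) * S ≥ -(w i / (2 * (|S| + 1)) * |S|) := by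
        have := neg_abs_le S
        nlinarith
      have h5 : w i / (2 * (|S| + 1)) * |S| ≤ w i / 2 := by
        rw [div_mul_eq_mul_div, div_le_div_iff₀ (by positivity) (by norm_num)]
        nlinarith [abs_nonneg S]
      linarith
    have hw0 : w = 0 := hkey w hwC hwneg
    have : f one = ⟪w, one⟫ := (hwf one).symm
    rw [hw0] at this
    simp at this
    rw [this, hc] at hfone
    exact lt_irrefl 0 hfone

lemma fpo_backward (n m k : ℕ) (hm : m = n * k) (v : Fin n → Fin m → ℝ)
    (A : Fin n → Finset (Fin m))
    (α : Fin n → ℝ) (hαpos : ∀ i, 0 < α i)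
    (hmax : ∀ B : Fin n → Finset (Fin m), IsBalanced n m k B →
      ∑ i : Fin n, α i * ∑ j ∈ B i, v i j ≤ ∑ i : Fin n, α i * ∑ j ∈ A i, v i j) :
    IsFPO n m k v A := by
  classical
  rintro ⟨x, ⟨hx0, hxrow, hxcol⟩, hdom, i0, hstrict⟩
  rcases Nat.eq_zero_or_pos m with hm0 | hmpos
  · subst hm0
    rw [Finset.univ_eq_empty, Finset.sum_empty,
      Finset.eq_empty_of_isEmpty (A i0), Finset.sum_empty] at hstrict
    exact lt_irrefl 0 hstrict
  have hk : 0 < k := by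
    rcases Nat.eq_zero_or_pos k with rfl | h
    · omega
    · exact h
  have hkR : (k : ℝ) ≠ 0 := by positivity
  set e : Fin n × Fin k ≃ Fin m := finProdFinEquiv.trans (finCongr hm.symm) with he
  set y : Matrix (Fin m) (Fin m) ℝ := fun p j => x (e.symm p).1 j / k with hy
  have hyDS : y ∈ doublyStochastic ℝ (Fin m) := by
    rw [mem_doublyStochastic_iff_sum]
    refine ⟨fun p j => div_nonneg (hx0 _ _) (by positivity), fun p => ?_, fun j => ?_⟩
    · rw [hy]
      simp only
      rw [← Finset.sum_div, hxrow, div_self hkR]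
    · rw [hy]
      simp only
      rw [← Equiv.sum_comp e (fun p => x (e.symm p).1 j / k)]
      simp only [Equiv.symm_apply_apply]
      rw [Fintype.sum_prod_type]
      have : ∀ i : Fin n, ∑ _c : Fin k, x i j / k = x i j := by
        intro i
        rw [Finset.sum_const, Finset.card_univ, Fintype.card_fin, nsmul_eq_mul]
        field_simp
      rw [Finset.sum_congr rfl (fun i _ => this i), hxcol]
  obtain ⟨w, hw0, hwsum, hwP⟩ := exists_eq_sum_perm_of_mem_doublyStochastic hyDS
  have hPentry : ∀ (σ : Equiv.Perm (Fin m)) p j,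
      (σ.permMatrix ℝ) p j = if σ p = j then (1:ℝ) else 0 := by
    intro σ p j
    simp [Equiv.Perm.permMatrix, PEquiv.toMatrix_apply, Equiv.toPEquiv_apply, eq_comm]
  have hyentry : ∀ p j, y p j = ∑ σ : Equiv.Perm (Fin m), w σ * (if σ p = j then (1:ℝ) else 0) := by
    intro p j
    have h1 := congrFun (congrFun hwP p) j
    rw [← h1, Matrix.sum_apply]
    exact Finset.sum_congr rfl fun σ _ => by rw [Matrix.smul_apply, hPentry, smul_eq_mul]
  set B : Equiv.Perm (Fin m) → Fin n → Finset (Fin m) :=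
    fun σ i => Finset.image (fun c => σ (e (i, c))) Finset.univ with hB
  have hinj : ∀ (σ : Equiv.Perm (Fin m)) (i : Fin n),
      Function.Injective (fun c : Fin k => σ (e (i, c))) := by
    intro σ i c1 c2 hc
    simp only at hc
    have h := e.injective (σ.injective hc)
    exact (Prod.ext_iff.1 h).2
  have hBbal : ∀ σ, IsBalanced n m k (B σ) := by
    intro σ
    constructor
    · intro j
      refine ⟨(e.symm (σ.symm j)).1, ?_, ?_⟩
      · rw [hB]
        simp only [Finset.mem_image, Finset.mem_univ, true_and]
        refine ⟨(e.symm (σ.symm j)).2, ?_⟩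
        have hpair : ((e.symm (σ.symm j)).1, (e.symm (σ.symm j)).2) = e.symm (σ.symm j) := rfl
        rw [hpair, Equiv.apply_symm_apply, Equiv.apply_symm_apply]
      · intro i hi
        rw [hB] at hi
        simp only [Finset.mem_image, Finset.mem_univ, true_and] at hi
        obtain ⟨c, hc⟩ := hi
        have h2 : e (i, c) = σ.symm j := by
          rw [← hc, Equiv.symm_apply_apply]
        have h3 : (i, c) = e.symm (σ.symm j) := by
          rw [← h2, Equiv.symm_apply_apply]
        rw [← h3]
    · intro i
      rw [hB]
      simp only
      rw [Finset.card_image_of_injective _ (hinj σ i), Finset.card_univ, Fintype.card_fin]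
  have hkey : ∀ i j, ∑ c : Fin k, y (e (i, c)) j = x i j := by
    intro i j
    have : ∀ c : Fin k, y (e (i, c)) j = x i j / k := by
      intro c
      rw [hy]
      simp only [Equiv.symm_apply_apply]
    rw [Finset.sum_congr rfl (fun c _ => this c), Finset.sum_const, Finset.card_univ,
      Fintype.card_fin, nsmul_eq_mul]
    field_simp
  have hux : ∀ i, ∑ j : Fin m, v i j * x i j
      = ∑ σ : Equiv.Perm (Fin m), w σ * ∑ j ∈ B σ i, v i j := by
    intro i
    have step1 : ∑ j : Fin m, v i j * x i j
        = ∑ c : Fin k, ∑ j : Fin m, v i j * y (e (i, c)) j := by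
      rw [Finset.sum_comm]
      exact Finset.sum_congr rfl fun j _ => by rw [← Finset.mul_sum, hkey]
    rw [step1]
    have step2 : ∀ c : Fin k, ∑ j : Fin m, v i j * y (e (i, c)) j
        = ∑ σ : Equiv.Perm (Fin m), w σ * v i (σ (e (i, c))) := by
      intro c
      have : ∀ j, v i j * y (e (i, c)) j
          = ∑ σ : Equiv.Perm (Fin m), (if σ (e (i, c)) = j then w σ * v i j else 0) := by
        intro j
        rw [hyentry, Finset.mul_sum]
        exact Finset.sum_congr rfl fun σ _ => by split <;> ring
      rw [Finset.sum_congr rfl (fun j _ => this j), Finset.sum_comm]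
      exact Finset.sum_congr rfl fun σ _ => by
        rw [Finset.sum_ite_eq Finset.univ (σ (e (i, c))) (fun j => w σ * v i j),
          if_pos (Finset.mem_univ _)]
    rw [Finset.sum_congr rfl (fun c _ => step2 c), Finset.sum_comm]
    refine Finset.sum_congr rfl fun σ _ => ?_
    rw [← Finset.mul_sum]
    congr 1
    rw [hB]
    simp only
    rw [Finset.sum_image (fun c1 _ c2 _ h => hinj σ i h)]
  -- welfare comparison
  have hWle : ∑ i : Fin n, α i * ∑ j : Fin m, v i j * x i j
      ≤ ∑ i : Fin n, α i * ∑ j ∈ A i, v i j := by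
    calc ∑ i : Fin n, α i * ∑ j : Fin m, v i j * x i j
        = ∑ σ : Equiv.Perm (Fin m), w σ * ∑ i : Fin n, α i * ∑ j ∈ B σ i, v i j := by
          rw [Finset.sum_congr rfl (fun i _ => by rw [hux i, Finset.mul_sum]), Finset.sum_comm]
          exact Finset.sum_congr rfl fun σ _ => by
            rw [Finset.mul_sum]
            exact Finset.sum_congr rfl fun i _ => by ring
      _ ≤ ∑ σ : Equiv.Perm (Fin m), w σ * ∑ i : Fin n, α i * ∑ j ∈ A i, v i j := by
          exact Finset.sum_le_sum fun σ _ =>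
            mul_le_mul_of_nonneg_left (hmax (B σ) (hBbal σ)) (hw0 σ)
      _ = ∑ i : Fin n, α i * ∑ j ∈ A i, v i j := by
          rw [← Finset.sum_mul, hwsum, one_mul]
  have hWgt : ∑ i : Fin n, α i * ∑ j ∈ A i, v i j
      < ∑ i : Fin n, α i * ∑ j : Fin m, v i j * x i j := by
    refine Finset.sum_lt_sum (fun i _ => mul_le_mul_of_nonneg_left (hdom i) (hαpos i).le)
      ⟨i0, Finset.mem_univ i0, ?_⟩
    exact mul_lt_mul_of_pos_left hstrict (hαpos i0)
  linarith


lemma bal_col {n m k : ℕ} {B : Fin n → Finset (Fin m)} (hB : IsBalanced n m k B) (j : Fin m) :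
    ∑ i : Fin n, (if j ∈ B i then (1:ℝ) else 0) = 1 := by
  obtain ⟨i0, hi0, huniq⟩ := hB.1 j
  rw [Finset.sum_eq_single i0]
  · simp [hi0]
  · intro b _ hb
    simp only [ite_eq_right_iff, one_ne_zero]
    intro hmem
    exact absurd (huniq b hmem) hb
  · intro h; exact absurd (Finset.mem_univ i0) h

lemma bal_row {n m k : ℕ} {B : Fin n → Finset (Fin m)} (hB : IsBalanced n m k B) (i : Fin n) :
    ∑ j : Fin m, (if j ∈ B i then (1:ℝ) else 0) = k := by
  rw [Finset.sum_ite_mem, Finset.univ_inter, Finset.sum_const, hB.2 i, nsmul_eq_mul, mul_one]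

lemma util_eq {m : ℕ} (f : Fin m → ℝ) (T : Finset (Fin m)) :
    ∑ j : Fin m, f j * (if j ∈ T then (1:ℝ) else 0) = ∑ j ∈ T, f j := by
  rw [Finset.sum_congr rfl (fun j _ => by rw [mul_ite, mul_one, mul_zero]),
    Finset.sum_ite_mem, Finset.univ_inter]

lemma fpo_forward (n m k : ℕ) (v : Fin n → Fin m → ℝ)
    (A : Fin n → Finset (Fin m)) (hA : IsBalanced n m k A)
    (hFPO : IsFPO n m k v A) :
    ∃ α : Fin n → ℝ, (∀ i, 0 < α i) ∧
      ∀ B : Fin n → Finset (Fin m), IsBalanced n m k B →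
        ∑ i : Fin n, α i * ∑ j ∈ B i, v i j ≤ ∑ i : Fin n, α i * ∑ j ∈ A i, v i j := by
  classical
  haveI : Fintype {B : Fin n → Finset (Fin m) // IsBalanced n m k B} := Fintype.ofFinite _
  set u : {B : Fin n → Finset (Fin m) // IsBalanced n m k B} → EuclideanSpace ℝ (Fin n) :=
    fun B => WithLp.toLp 2 (fun i => ∑ j ∈ B.1 i, v i j : Fin n → ℝ) with hu
  set uA : EuclideanSpace ℝ (Fin n) := u ⟨A, hA⟩ with huA
  set g : {B : Fin n → Finset (Fin m) // IsBalanced n m k B} → EuclideanSpace ℝ (Fin n) :=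
    fun B => uA - u B with hg
  have hsumcoord : ∀ (w : {B : Fin n → Finset (Fin m) // IsBalanced n m k B}
      → EuclideanSpace ℝ (Fin n)) (i : Fin n), (∑ B, w B) i = ∑ B, w B i := by
    intro w i
    simp [WithLp.ofLp_sum, Finset.sum_apply]
  have huAi : ∀ i, uA i = ∑ j ∈ A i, v i j := fun i => rfl
  have huBi : ∀ B i, u B i = ∑ j ∈ B.1 i, v i j := fun B i => rfl
  have hkey : ∀ x ∈ coneGen g, (∀ i, x i ≤ 0) → x = 0 := by
    rintro x ⟨lam, hlam, rfl⟩ hxle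
    by_contra hxne
    have hexi : ∃ i, (∑ B, lam B • g B) i ≠ 0 := by
      by_contra h
      push_neg at h
      exact hxne (PiLp.ext h)
    obtain ⟨i0, hi0⟩ := hexi
    have hxcoord : ∀ i, (∑ B, lam B • g B) i = ∑ B, lam B * (uA i - u B i) := by
      intro i
      rw [hsumcoord]
      exact Finset.sum_congr rfl fun B _ => by
        rw [hg]; simp [PiLp.smul_apply, PiLp.sub_apply, smul_eq_mul]
    set s : ℝ := ∑ B, lam B with hs
    have hs0 : 0 ≤ s := Finset.sum_nonneg fun B _ => hlam B
    have hspos : 0 < s := by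
      rcases hs0.eq_or_lt with h | h
      · exfalso
        have hall : ∀ B ∈ Finset.univ, lam B = 0 :=
          (Finset.sum_eq_zero_iff_of_nonneg (fun B _ => hlam B)).1 h.symm
        apply hxne
        rw [Finset.sum_congr rfl (fun B hB => by rw [hall B hB, zero_smul])]
        simp
      · exact h
    have hsne : s ≠ 0 := ne_of_gt hspos
    set xf : Fin n → Fin m → ℝ :=
      fun i j => ∑ B, (lam B / s) * (if j ∈ B.1 i then (1:ℝ) else 0) with hxf
    have hfrac : IsFracBalanced n m k xf := by
      refine ⟨fun i j => Finset.sum_nonneg fun B _ => ?_, fun i => ?_, fun j => ?_⟩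
      · have : (0:ℝ) ≤ lam B / s := div_nonneg (hlam B) hs0
        positivity
      · rw [Finset.sum_comm]
        rw [Finset.sum_congr rfl (fun B _ => by
          rw [← Finset.mul_sum, bal_row B.2 i])]
        rw [← Finset.sum_mul, ← Finset.sum_div, ← hs, div_self hsne, one_mul]
      · rw [Finset.sum_comm]
        rw [Finset.sum_congr rfl (fun B _ => by
          rw [← Finset.mul_sum, bal_col B.2 j, mul_one])]
        rw [← Finset.sum_div, ← hs, div_self hsne]
    have hutilB : ∀ i, ∑ j : Fin m, v i j * xf i j = ∑ B, (lam B / s) * u B i := by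
      intro i
      have e1 : ∀ j, v i j * xf i j
          = ∑ B, (lam B / s) * (v i j * (if j ∈ B.1 i then (1:ℝ) else 0)) := by
        intro j
        rw [hxf]
        simp only
        rw [Finset.mul_sum]
        exact Finset.sum_congr rfl fun B _ => by ring
      rw [Finset.sum_congr rfl (fun j _ => e1 j), Finset.sum_comm]
      refine Finset.sum_congr rfl fun B _ => ?_
      rw [← Finset.mul_sum, util_eq (fun j => v i j) (B.1 i), huBi]
    have hsumu : ∀ i, ∑ B, lam B * u B i = s * uA i - (∑ B, lam B • g B) i := by
      intro i
      rw [hxcoord]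
      rw [Finset.sum_congr rfl (fun B _ => (mul_sub (lam B) (uA i) (u B i) : _)),
        Finset.sum_sub_distrib, ← Finset.sum_mul, ← hs]
      ring
    have hutil : ∀ i, ∑ j : Fin m, v i j * xf i j
        = uA i - (∑ B, lam B • g B) i / s := by
      intro i
      rw [hutilB]
      rw [Finset.sum_congr rfl (fun B _ => div_mul_eq_mul_div (lam B) s (u B i)),
        ← Finset.sum_div, hsumu]
      field_simp
    apply hFPO
    refine ⟨xf, hfrac, fun i => ?_, ⟨i0, ?_⟩⟩
    · rw [hutil, ← huAi]
      have h1 : (∑ B, lam B • g B) i / s ≤ 0 :=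
        div_nonpos_of_nonpos_of_nonneg (hxle i) hs0
      linarith
    · rw [hutil, ← huAi]
      have h1 : (∑ B, lam B • g B) i0 / s < 0 :=
        div_neg_of_neg_of_pos (lt_of_le_of_ne (hxle i0) hi0) hspos
      linarith
  obtain ⟨α, hα1, hα2⟩ := exists_pos_dual_vector g hkey
  refine ⟨fun i => α i, fun i => hα1 i, ?_⟩
  intro B hB
  have h2 := hα2 ⟨B, hB⟩
  rw [eucl_inner_eq] at h2
  have h3 : ∀ i, g ⟨B, hB⟩ i * α i
      = α i * (∑ j ∈ A i, v i j) - α i * (∑ j ∈ B i, v i j) := by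
    intro i
    have hgi : g ⟨B, hB⟩ i = uA i - u ⟨B, hB⟩ i := by
      rw [hg]
      simp [PiLp.sub_apply]
    rw [hgi, huAi, huBi]
    ring
  rw [Finset.sum_congr rfl (fun i _ => h3 i), Finset.sum_sub_distrib] at h2
  linarith

/-- A balanced allocation is fPO iff it maximizes a strictly positively weighted
utilitarian social welfare over all balanced allocations. -/
theorem stmt0 (n m k : ℕ) (hn : 0 < n) (hm : m = n * k)
    (v : Fin n → Fin m → ℝ) (hv : ∀ i j, 0 ≤ v i j)
    (A : Fin n → Finset (Fin m)) (hA : IsBalanced n m k A) :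
    IsFPO n m k v A ↔
      ∃ α : Fin n → ℝ, (∀ i, 0 < α i) ∧
        ∀ B : Fin n → Finset (Fin m), IsBalanced n m k B →
          ∑ i : Fin n, α i * ∑ j ∈ B i, v i j ≤ ∑ i : Fin n, α i * ∑ j ∈ A i, v i j := by
  constructor
  · exact fun h => fpo_forward n m k v A hA h
  · rintro ⟨α, h1, h2⟩
    exact fpo_backward n m k hm v A α h1 h2
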